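/- Let g = (g1, g2) be a vector field on ℝ² whose components are twice continuously differentiable and compactly supported, and let f = d⊥ g be the symmetric 2-tensor field with components f11 = −∂g1/∂x2, f12 = (1/2)(∂g1/∂x1 − ∂g2/∂x2), f22 = ∂g2/∂x1. Then for every x ∈ ℝ²: Tf(x) = 2 u2 g1(x), and Mf(x) = −2 u2 g2(x) − (1/2)[X_u(∂g1/∂x1 + ∂g2/∂x2)(x) + X_v(∂g1/∂x1 + ∂g2/∂x2)(x)]. -/

import Mathlib

noncomputable section

open MeasureTheory

/-- The divergent beam transform `X_w h (x) = ∫₀^∞ h(x + t w) dt`. -/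
def Xbeam (w : ℝ × ℝ) (h : ℝ × ℝ → ℝ) (x : ℝ × ℝ) : ℝ :=
  ∫ t in Set.Ioi (0 : ℝ), h (x + t • w)

/-- The k-th moment divergent beam transform `X_w^k h (x) = ∫₀^∞ t^k h(x + t w) dt`. -/
def Xmom (k : ℕ) (w : ℝ × ℝ) (h : ℝ × ℝ → ℝ) (x : ℝ × ℝ) : ℝ :=
  ∫ t in Set.Ioi (0 : ℝ), t ^ k * h (x + t • w)

/-- The directional derivative `D_w h = w ⋅ ∇h`. -/
def Dir (w : ℝ × ℝ) (h : ℝ × ℝ → ℝ) (x : ℝ × ℝ) : ℝ :=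
  fderiv ℝ h x w

/-- Support contained in the open unit disc `D1`. -/
def SuppInDisc (h : ℝ × ℝ → ℝ) : Prop :=
  ∀ x : ℝ × ℝ, 1 ≤ x.1 ^ 2 + x.2 ^ 2 → h x = 0

/-- The longitudinal V-line transform. -/
def VlineL (u1 u2 : ℝ) (f11 f12 f22 : ℝ × ℝ → ℝ) : ℝ × ℝ → ℝ :=
  Xbeam (u1, u2) (fun y => u1 ^ 2 * f11 y + 2 * u1 * u2 * f12 y + u2 ^ 2 * f22 y)
    + Xbeam (-u1, u2) (fun y => u1 ^ 2 * f11 y - 2 * u1 * u2 * f12 y + u2 ^ 2 * f22 y)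

/-- The transverse V-line transform. -/
def VlineT (u1 u2 : ℝ) (f11 f12 f22 : ℝ × ℝ → ℝ) : ℝ × ℝ → ℝ :=
  Xbeam (u1, u2) (fun y => u2 ^ 2 * f11 y - 2 * u1 * u2 * f12 y + u1 ^ 2 * f22 y)
    + Xbeam (-u1, u2) (fun y => u2 ^ 2 * f11 y + 2 * u1 * u2 * f12 y + u1 ^ 2 * f22 y)

/-- The mixed V-line transform. -/
def VlineM (u1 u2 : ℝ) (f11 f12 f22 : ℝ × ℝ → ℝ) : ℝ × ℝ → ℝ :=
  Xbeam (u1, u2) (fun y => -(u1 * u2) * f11 y + (u1 ^ 2 - u2 ^ 2) * f12 y + u1 * u2 * f22 y)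
    + Xbeam (-u1, u2) (fun y => u1 * u2 * f11 y + (u1 ^ 2 - u2 ^ 2) * f12 y - u1 * u2 * f22 y)

/-- The k-th moment longitudinal V-line transform. -/
def VlineLk (k : ℕ) (u1 u2 : ℝ) (f11 f12 f22 : ℝ × ℝ → ℝ) : ℝ × ℝ → ℝ :=
  Xmom k (u1, u2) (fun y => u1 ^ 2 * f11 y + 2 * u1 * u2 * f12 y + u2 ^ 2 * f22 y)
    + Xmom k (-u1, u2) (fun y => u1 ^ 2 * f11 y - 2 * u1 * u2 * f12 y + u2 ^ 2 * f22 y)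

/-- The k-th moment transverse V-line transform. -/
def VlineTk (k : ℕ) (u1 u2 : ℝ) (f11 f12 f22 : ℝ × ℝ → ℝ) : ℝ × ℝ → ℝ :=
  Xmom k (u1, u2) (fun y => u2 ^ 2 * f11 y - 2 * u1 * u2 * f12 y + u1 ^ 2 * f22 y)
    + Xmom k (-u1, u2) (fun y => u2 ^ 2 * f11 y + 2 * u1 * u2 * f12 y + u1 ^ 2 * f22 y)

/-- The k-th moment mixed V-line transform. -/
def VlineMk (k : ℕ) (u1 u2 : ℝ) (f11 f12 f22 : ℝ × ℝ → ℝ) : ℝ × ℝ → ℝ :=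
  Xmom k (u1, u2) (fun y => -(u1 * u2) * f11 y + (u1 ^ 2 - u2 ^ 2) * f12 y + u1 * u2 * f22 y)
    + Xmom k (-u1, u2) (fun y => u1 * u2 * f11 y + (u1 ^ 2 - u2 ^ 2) * f12 y - u1 * u2 * f22 y)

section Aux

open Filter

/-- Evaluation of a linear functional on `ℝ × ℝ` at a pair. -/
lemma clm_apply_pair (L : ℝ × ℝ →L[ℝ] ℝ) (a b : ℝ) :
    L (a, b) = a * L ((1 : ℝ), (0 : ℝ)) + b * L ((0 : ℝ), (1 : ℝ)) := by
  have h : (a, b) = a • ((1 : ℝ), (0 : ℝ)) + b • ((0 : ℝ), (1 : ℝ)) := by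
    simp [Prod.smul_def, Prod.ext_iff]
  rw [h, map_add, ContinuousLinearMap.map_smul, ContinuousLinearMap.map_smul, smul_eq_mul, smul_eq_mul]

/-- Composition with a ray preserves compact support (when the direction is nonzero). -/
lemma hasCompactSupport_ray {E : Type*} [NormedAddCommGroup E] [Zero E]
    (F : ℝ × ℝ → E) (hF : HasCompactSupport F) (w : ℝ × ℝ) (hw : w ≠ 0) (x : ℝ × ℝ) :
    HasCompactSupport (fun t : ℝ => F (x + t • w)) := by
  obtain ⟨R, hR⟩ := hF.isCompact.isBounded.subset_closedBall 0
  have hnw : 0 < ‖w‖ := norm_pos_iff.mpr hw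
  apply HasCompactSupport.intro (isCompact_Icc (a := -((R + ‖x‖) / ‖w‖)) (b := (R + ‖x‖) / ‖w‖))
  intro t ht
  apply image_eq_zero_of_notMem_tsupport
  intro hmem
  have h1 : ‖x + t • w‖ ≤ R := by simpa using hR hmem
  have h2 : ‖t • w‖ ≤ R + ‖x‖ := by
    have : ‖(x + t • w) - x‖ ≤ ‖x + t • w‖ + ‖x‖ := norm_sub_le _ _
    simpa using this.trans (by linarith)
  have h3 : |t| * ‖w‖ ≤ R + ‖x‖ := by rwa [norm_smul, Real.norm_eq_abs] at h2
  exact ht (Set.mem_Icc.mpr (abs_le.mp ((le_div_iff₀ hnw).mpr h3)))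

/-- Integrability of the directional derivative along a ray. -/
lemma integrableOn_fderiv_ray (g : ℝ × ℝ → ℝ) (hg : ContDiff ℝ 1 g)
    (hc : HasCompactSupport g) (w v x : ℝ × ℝ) (hw : w ≠ 0) :
    MeasureTheory.IntegrableOn (fun t : ℝ => fderiv ℝ g (x + t • w) v) (Set.Ioi (0 : ℝ)) := by
  have hcont : Continuous fun t : ℝ => fderiv ℝ g (x + t • w) v := by
    have h1 : Continuous fun t : ℝ => x + t • w := by continuity
    exact ((hg.continuous_fderiv one_ne_zero).comp h1).clm_apply continuous_const
  have hcs : HasCompactSupport fun t : ℝ => fderiv ℝ g (x + t • w) v := by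
    have hF : HasCompactSupport fun y => fderiv ℝ g y v :=
      (hc.fderiv ℝ).comp_left (g := fun L : ℝ × ℝ →L[ℝ] ℝ => L v) rfl
    exact hasCompactSupport_ray _ hF w hw x
  exact (hcont.integrable_of_hasCompactSupport hcs).integrableOn

/-- The divergent beam transform of a directional derivative in the beam direction. -/
lemma Xbeam_fderiv (h : ℝ × ℝ → ℝ) (hh : ContDiff ℝ 1 h) (hc : HasCompactSupport h)
    (w : ℝ × ℝ) (hw : w ≠ 0) (x : ℝ × ℝ) :
    Xbeam w (fun y => fderiv ℝ h y w) x = -(h x) := by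
  have hdiff : Differentiable ℝ h := hh.differentiable one_ne_zero
  have hline : ∀ t : ℝ, HasDerivAt (fun s : ℝ => x + s • w) w t := by
    intro t
    simpa using ((hasDerivAt_id t).smul_const w).const_add x
  have hderiv : ∀ t ∈ Set.Ioi (0 : ℝ),
      HasDerivAt (fun s : ℝ => h (x + s • w)) (fderiv ℝ h (x + t • w) w) t := by
    intro t _
    exact (hdiff (x + t • w)).hasFDerivAt.comp_hasDerivAt t (hline t)
  have hint : MeasureTheory.IntegrableOn
      (fun t : ℝ => fderiv ℝ h (x + t • w) w) (Set.Ioi (0 : ℝ)) :=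
    integrableOn_fderiv_ray h hh hc w w x hw
  have hφcs : HasCompactSupport fun t : ℝ => h (x + t • w) :=
    hasCompactSupport_ray h hc w hw x
  have htend : Tendsto (fun t : ℝ => h (x + t • w)) atTop (nhds 0) := by
    obtain ⟨T, hT⟩ := hφcs.isCompact.isBounded.subset_closedBall 0
    have hev : (fun t : ℝ => h (x + t • w)) =ᶠ[atTop] fun _ => (0 : ℝ) := by
      filter_upwards [eventually_gt_atTop T] with t ht
      apply image_eq_zero_of_notMem_tsupport (f := fun s : ℝ => h (x + s • w)) (x := t)
      intro hm
      have := hT hm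
      simp only [Metric.mem_closedBall, Real.dist_eq, sub_zero] at this
      have : t ≤ T := le_trans (le_abs_self t) this
      linarith
    exact Tendsto.congr' hev.symm tendsto_const_nhds
  have hcont : ContinuousWithinAt (fun t : ℝ => h (x + t • w)) (Set.Ici (0 : ℝ)) 0 := by
    have : Continuous fun t : ℝ => h (x + t • w) := by
      exact hdiff.continuous.comp (by continuity)
    exact this.continuousWithinAt
  have := MeasureTheory.integral_Ioi_of_hasDerivAt_of_tendsto hcont hderiv hint htend
  simp only [Xbeam]
  rw [this]
  simp

/-- Combination lemma: beam transform of `a * D_w g1 + b * D_w g2`. -/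
lemma Xbeam_comb (g1 g2 : ℝ × ℝ → ℝ) (hg1 : ContDiff ℝ 1 g1) (hg2 : ContDiff ℝ 1 g2)
    (hc1 : HasCompactSupport g1) (hc2 : HasCompactSupport g2)
    (a b : ℝ) (w : ℝ × ℝ) (hw : w ≠ 0) (x : ℝ × ℝ) :
    Xbeam w (fun y => a * fderiv ℝ g1 y w + b * fderiv ℝ g2 y w) x
      = -(a * g1 x + b * g2 x) := by
  set h : ℝ × ℝ → ℝ := fun y => a * g1 y + b * g2 y with hh_def
  have hh : ContDiff ℝ 1 h := (contDiff_const.mul hg1).add (contDiff_const.mul hg2)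
  have hcs : HasCompactSupport h := (hc1.mul_left).add (hc2.mul_left)
  have hder : ∀ y : ℝ × ℝ, fderiv ℝ h y w = a * fderiv ℝ g1 y w + b * fderiv ℝ g2 y w := by
    intro y
    have h1 : DifferentiableAt ℝ g1 y := (hg1.differentiable one_ne_zero) y
    have h2 : DifferentiableAt ℝ g2 y := (hg2.differentiable one_ne_zero) y
    rw [hh_def, fderiv_fun_add (h1.const_mul a) (h2.const_mul b), fderiv_const_mul h1,
      fderiv_const_mul h2]
    simp
  have : (fun y => a * fderiv ℝ g1 y w + b * fderiv ℝ g2 y w)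
      = fun y => fderiv ℝ h y w := by
    funext y; rw [hder y]
  rw [this, Xbeam_fderiv h hh hcs w hw x]

/-- Additivity of the beam transform given integrability. -/
lemma Xbeam_add (p q : ℝ × ℝ → ℝ) (w x : ℝ × ℝ)
    (hp : MeasureTheory.IntegrableOn (fun t : ℝ => p (x + t • w)) (Set.Ioi (0 : ℝ)))
    (hq : MeasureTheory.IntegrableOn (fun t : ℝ => q (x + t • w)) (Set.Ioi (0 : ℝ))) :
    Xbeam w (fun y => p y + q y) x = Xbeam w p x + Xbeam w q x := by
  simp only [Xbeam]
  exact MeasureTheory.integral_add hp hq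

/-- Pulling out a constant from the beam transform. -/
lemma Xbeam_const_mul (c : ℝ) (p : ℝ × ℝ → ℝ) (w x : ℝ × ℝ) :
    Xbeam w (fun y => c * p y) x = c * Xbeam w p x := by
  simp only [Xbeam]
  exact MeasureTheory.integral_const_mul c _

end Aux

/-- the transverse and mixed V-line transforms of a solenoidal
tensor field `f = d⊥ g`. -/
theorem solenoidal_field_T_and_M
    (u1 u2 : ℝ) (hu : u1 ^ 2 + u2 ^ 2 = 1) (hu1 : 0 < u1) (hu2 : 0 < u2)
    (g1 g2 : ℝ × ℝ → ℝ)
    (hg1 : ContDiff ℝ 2 g1) (hg2 : ContDiff ℝ 2 g2)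
    (hc1 : HasCompactSupport g1) (hc2 : HasCompactSupport g2)
    (f11 f12 f22 : ℝ × ℝ → ℝ)
    (hf11 : ∀ y : ℝ × ℝ, f11 y = -fderiv ℝ g1 y ((0 : ℝ), (1 : ℝ)))
    (hf12 : ∀ y : ℝ × ℝ, f12 y =
      (1 / 2) * (fderiv ℝ g1 y ((1 : ℝ), (0 : ℝ)) - fderiv ℝ g2 y ((0 : ℝ), (1 : ℝ))))
    (hf22 : ∀ y : ℝ × ℝ, f22 y = fderiv ℝ g2 y ((1 : ℝ), (0 : ℝ)))
    (x : ℝ × ℝ) :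
    VlineT u1 u2 f11 f12 f22 x = 2 * u2 * g1 x ∧
    VlineM u1 u2 f11 f12 f22 x =
      -(2 * u2) * g2 x -
        (1 / 2) *
          (Xbeam (u1, u2)
              (fun y => fderiv ℝ g1 y ((1 : ℝ), (0 : ℝ)) + fderiv ℝ g2 y ((0 : ℝ), (1 : ℝ))) x +
            Xbeam (-u1, u2)
              (fun y => fderiv ℝ g1 y ((1 : ℝ), (0 : ℝ)) + fderiv ℝ g2 y ((0 : ℝ), (1 : ℝ))) x) := by
  have hg1' : ContDiff ℝ 1 g1 := hg1.of_le one_le_two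
  have hg2' : ContDiff ℝ 1 g2 := hg2.of_le one_le_two
  have hwu : ((u1, u2) : ℝ × ℝ) ≠ 0 := by
    intro h
    rw [Prod.mk_eq_zero] at h
    exact absurd h.1 hu1.ne'
  have hwv : ((-u1, u2) : ℝ × ℝ) ≠ 0 := by
    intro h
    rw [Prod.mk_eq_zero] at h
    exact absurd h.2 hu2.ne'
  constructor
  · -- transverse part
    have e1 : (fun y => u2 ^ 2 * f11 y - 2 * u1 * u2 * f12 y + u1 ^ 2 * f22 y)
        = fun y => (-u2) * fderiv ℝ g1 y (u1, u2) + u1 * fderiv ℝ g2 y (u1, u2) := by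
      funext y
      rw [hf11 y, hf12 y, hf22 y, clm_apply_pair (fderiv ℝ g1 y) u1 u2,
        clm_apply_pair (fderiv ℝ g2 y) u1 u2]
      ring
    have e2 : (fun y => u2 ^ 2 * f11 y + 2 * u1 * u2 * f12 y + u1 ^ 2 * f22 y)
        = fun y => (-u2) * fderiv ℝ g1 y (-u1, u2) + (-u1) * fderiv ℝ g2 y (-u1, u2) := by
      funext y
      rw [hf11 y, hf12 y, hf22 y, clm_apply_pair (fderiv ℝ g1 y) (-u1) u2,
        clm_apply_pair (fderiv ℝ g2 y) (-u1) u2]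
      ring
    simp only [VlineT, Pi.add_apply]
    rw [e1, e2, Xbeam_comb g1 g2 hg1' hg2' hc1 hc2 (-u2) u1 (u1, u2) hwu x,
      Xbeam_comb g1 g2 hg1' hg2' hc1 hc2 (-u2) (-u1) (-u1, u2) hwv x]
    ring
  · -- mixed part
    have eM1 : (fun y => -(u1 * u2) * f11 y + (u1 ^ 2 - u2 ^ 2) * f12 y + u1 * u2 * f22 y)
        = fun y => (u1 * fderiv ℝ g1 y (u1, u2) + u2 * fderiv ℝ g2 y (u1, u2))
            + (-(1 / 2)) * (fderiv ℝ g1 y ((1 : ℝ), (0 : ℝ)) + fderiv ℝ g2 y ((0 : ℝ), (1 : ℝ))) := by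
      funext y
      rw [hf11 y, hf12 y, hf22 y, clm_apply_pair (fderiv ℝ g1 y) u1 u2,
        clm_apply_pair (fderiv ℝ g2 y) u1 u2]
      linear_combination (-(1 / 2) * (fderiv ℝ g1 y ((1 : ℝ), (0 : ℝ))
        + fderiv ℝ g2 y ((0 : ℝ), (1 : ℝ)))) * hu
    have eM2 : (fun y => u1 * u2 * f11 y + (u1 ^ 2 - u2 ^ 2) * f12 y - u1 * u2 * f22 y)
        = fun y => ((-u1) * fderiv ℝ g1 y (-u1, u2) + u2 * fderiv ℝ g2 y (-u1, u2))
            + (-(1 / 2)) * (fderiv ℝ g1 y ((1 : ℝ), (0 : ℝ)) + fderiv ℝ g2 y ((0 : ℝ), (1 : ℝ))) := by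
      funext y
      rw [hf11 y, hf12 y, hf22 y, clm_apply_pair (fderiv ℝ g1 y) (-u1) u2,
        clm_apply_pair (fderiv ℝ g2 y) (-u1) u2]
      linear_combination (-(1 / 2) * (fderiv ℝ g1 y ((1 : ℝ), (0 : ℝ))
        + fderiv ℝ g2 y ((0 : ℝ), (1 : ℝ)))) * hu
    have hp1 : MeasureTheory.IntegrableOn
        (fun t : ℝ => u1 * fderiv ℝ g1 (x + t • ((u1, u2) : ℝ × ℝ)) (u1, u2)
          + u2 * fderiv ℝ g2 (x + t • ((u1, u2) : ℝ × ℝ)) (u1, u2)) (Set.Ioi (0 : ℝ)) :=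
      ((integrableOn_fderiv_ray g1 hg1' hc1 (u1, u2) (u1, u2) x hwu).const_mul u1).add
        ((integrableOn_fderiv_ray g2 hg2' hc2 (u1, u2) (u1, u2) x hwu).const_mul u2)
    have hq1 : MeasureTheory.IntegrableOn
        (fun t : ℝ => (-(1 / 2)) * (fderiv ℝ g1 (x + t • ((u1, u2) : ℝ × ℝ)) ((1 : ℝ), (0 : ℝ))
          + fderiv ℝ g2 (x + t • ((u1, u2) : ℝ × ℝ)) ((0 : ℝ), (1 : ℝ)))) (Set.Ioi (0 : ℝ)) :=
      (((integrableOn_fderiv_ray g1 hg1' hc1 (u1, u2) (1, 0) x hwu).add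
        (integrableOn_fderiv_ray g2 hg2' hc2 (u1, u2) (0, 1) x hwu)).const_mul _)
    have hp2 : MeasureTheory.IntegrableOn
        (fun t : ℝ => (-u1) * fderiv ℝ g1 (x + t • ((-u1, u2) : ℝ × ℝ)) (-u1, u2)
          + u2 * fderiv ℝ g2 (x + t • ((-u1, u2) : ℝ × ℝ)) (-u1, u2)) (Set.Ioi (0 : ℝ)) :=
      ((integrableOn_fderiv_ray g1 hg1' hc1 (-u1, u2) (-u1, u2) x hwv).const_mul (-u1)).add
        ((integrableOn_fderiv_ray g2 hg2' hc2 (-u1, u2) (-u1, u2) x hwv).const_mul u2)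
    have hq2 : MeasureTheory.IntegrableOn
        (fun t : ℝ => (-(1 / 2)) * (fderiv ℝ g1 (x + t • ((-u1, u2) : ℝ × ℝ)) ((1 : ℝ), (0 : ℝ))
          + fderiv ℝ g2 (x + t • ((-u1, u2) : ℝ × ℝ)) ((0 : ℝ), (1 : ℝ)))) (Set.Ioi (0 : ℝ)) :=
      (((integrableOn_fderiv_ray g1 hg1' hc1 (-u1, u2) (1, 0) x hwv).add
        (integrableOn_fderiv_ray g2 hg2' hc2 (-u1, u2) (0, 1) x hwv)).const_mul _)
    simp only [VlineM, Pi.add_apply]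
    rw [eM1, eM2,
      Xbeam_add (fun y => u1 * fderiv ℝ g1 y (u1, u2) + u2 * fderiv ℝ g2 y (u1, u2))
        (fun y => (-(1 / 2)) * (fderiv ℝ g1 y ((1 : ℝ), (0 : ℝ))
          + fderiv ℝ g2 y ((0 : ℝ), (1 : ℝ)))) (u1, u2) x hp1 hq1,
      Xbeam_add (fun y => (-u1) * fderiv ℝ g1 y (-u1, u2) + u2 * fderiv ℝ g2 y (-u1, u2))
        (fun y => (-(1 / 2)) * (fderiv ℝ g1 y ((1 : ℝ), (0 : ℝ))
          + fderiv ℝ g2 y ((0 : ℝ), (1 : ℝ)))) (-u1, u2) x hp2 hq2,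
      Xbeam_const_mul, Xbeam_const_mul,
      Xbeam_comb g1 g2 hg1' hg2' hc1 hc2 u1 u2 (u1, u2) hwu x,
      Xbeam_comb g1 g2 hg1' hg2' hc1 hc2 (-u1) u2 (-u1, u2) hwv x]
    ring
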